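/- For integers m ≥ 0, r ≥ 1 and λ ≥ 0, the number ∑_{t=λ}^{m} C(t,λ)·B_{m,t}(x_1,…,x_m), where x_s = r^s - (r-1)^s and B_{m,t} denotes the partial Bell polynomial, equals ∑_{t=0}^{m} C(t,λ) · ∑_{s=t}^{m} C(m,s)·S(s,t)·(t(r-1))^{m-s}, where S(s,t) is the Stirling number of the second kind and 0^0 = 1. -/

import Mathlib

open PowerSeries Finset

/-- Stirling numbers of the second kind. -/
def stirling2 : ℕ → ℕ → ℕ
  | 0, 0 => 1
  | 0, _ + 1 => 0
  | _ + 1, 0 => 0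
  | n + 1, k + 1 => (k + 1) * stirling2 n (k + 1) + stirling2 n k

lemma stirling2_eq_zero_of_lt : ∀ (n t : ℕ), n < t → stirling2 n t = 0 := by
  intro n
  induction n with
  | zero =>
    intro t ht
    cases t with
    | zero => omega
    | succ t => rfl
  | succ n ih =>
    intro t ht
    cases t with
    | zero => omega
    | succ t =>
      rw [stirling2, ih (t+1) (by omega), ih t (by omega)]
      simp

lemma derivative_exp' : d⁄dX ℚ (exp ℚ) = exp ℚ := by
  ext n
  rw [coeff_derivative, coeff_exp, coeff_exp]
  have h : ((n+1).factorial : ℚ) = (n.factorial : ℚ) * (n+1) := by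
    push_cast [Nat.factorial_succ]; ring
  have h0 : (n.factorial : ℚ) ≠ 0 := by positivity
  simp only [Algebra.algebraMap_self, RingHom.id_apply]
  rw [h]
  field_simp

lemma coeff_exp_sub_one_pow : ∀ n t : ℕ,
    coeff (R := ℚ) n ((exp ℚ - 1) ^ t) * n.factorial = (t.factorial : ℚ) * stirling2 n t := by
  intro n
  induction n with
  | zero =>
    intro t
    rw [coeff_zero_eq_constantCoeff, map_pow]
    cases t with
    | zero => simp [stirling2]
    | succ t => simp [stirling2, constantCoeff_exp]
  | succ n ih =>
    intro t
    cases t with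
    | zero => simp [stirling2, coeff_one]
    | succ t =>
      have hDE : d⁄dX ℚ (exp ℚ - 1) = exp ℚ := by
        rw [map_sub, derivative_exp', Derivation.map_one_eq_zero, sub_zero]
      have hmul : (exp ℚ - 1)^t * exp ℚ = (exp ℚ - 1)^(t+1) + (exp ℚ - 1)^t := by ring
      have h1 : d⁄dX ℚ ((exp ℚ - 1)^(t+1)) =
          (t+1 : ℕ) • ((exp ℚ - 1)^(t+1) + (exp ℚ - 1)^t) := by
        rw [Derivation.leibniz_pow, hDE, Nat.add_sub_cancel, smul_eq_mul, hmul]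
      have key : coeff (R := ℚ) (n+1) ((exp ℚ - 1)^(t+1)) * (n+1) =
          ((t:ℚ)+1) * (coeff (R := ℚ) n ((exp ℚ - 1)^(t+1)) + coeff (R := ℚ) n ((exp ℚ - 1)^t)) := by
        have h2 := congrArg (coeff (R := ℚ) n) h1
        rw [coeff_derivative, map_nsmul, nsmul_eq_mul, map_add] at h2
        push_cast at h2 ⊢
        linarith [h2]
      have h1' := ih (t+1)
      have h0' := ih t
      rw [stirling2]
      push_cast [Nat.factorial_succ] at h1' h0' ⊢
      linear_combination (n.factorial : ℚ) * key + ((t:ℚ)+1) * h1' + ((t:ℚ)+1) * h0'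

lemma rescale_rescale_exp (a : ℚ) (t : ℕ) :
    (rescale a (exp ℚ)) ^ t = rescale (a * t) (exp ℚ) := by
  rw [← map_pow, exp_pow_eq_rescale_exp]
  ext n
  simp only [coeff_rescale, mul_pow]
  ring

lemma f_eq (r : ℕ) :
    (PowerSeries.mk (fun s : ℕ =>
        if s = 0 then 0 else ((r : ℚ) ^ s - ((r : ℚ) - 1) ^ s) / (s.factorial : ℚ)))
      = rescale ((r:ℚ)-1) (exp ℚ) * (exp ℚ - 1) := by
  have h1 : rescale ((r:ℚ)-1) (exp ℚ) * exp ℚ = rescale (r:ℚ) (exp ℚ) := by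
    nth_rewrite 2 [show (exp ℚ) = rescale (1:ℚ) (exp ℚ) from by rw [rescale_one]; rfl]
    rw [exp_mul_exp_eq_exp_add]
    norm_num
  rw [mul_sub, mul_one, h1]
  ext n
  rw [coeff_mk, map_sub, coeff_rescale, coeff_rescale, coeff_exp]
  simp only [Algebra.algebraMap_self, RingHom.id_apply]
  rcases eq_or_ne n 0 with h | h
  · subst h; simp
  · rw [if_neg h]
    have h0 : (n.factorial : ℚ) ≠ 0 := by positivity
    field_simp

theorem stmt_6 (m r lam : ℕ) (hr : 1 ≤ r) (B : ℕ → ℕ → ℚ)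
    (hB : ∀ t n : ℕ,
      B n t / (n.factorial : ℚ) =
        PowerSeries.coeff (R := ℚ) n
          (((t.factorial : ℚ)⁻¹ : ℚ) •
            (PowerSeries.mk (fun s : ℕ =>
              if s = 0 then 0
              else ((r : ℚ) ^ s - ((r : ℚ) - 1) ^ s) / (s.factorial : ℚ))) ^ t)) :
    (∑ t ∈ Finset.Icc lam m, (t.choose lam : ℚ) * B m t)
      = ∑ t ∈ Finset.range (m + 1), (t.choose lam : ℚ) *
          ∑ s ∈ Finset.Icc t m,
            (m.choose s : ℚ) * (stirling2 s t : ℚ) * ((t * (r - 1) : ℕ) : ℚ) ^ (m - s) := by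
  have hBeq : ∀ t ∈ Finset.range (m+1), B m t =
      ∑ s ∈ Finset.Icc t m,
        (m.choose s : ℚ) * (stirling2 s t : ℚ) * ((t * (r - 1) : ℕ) : ℚ) ^ (m - s) := by
    intro t ht
    rw [Finset.mem_range] at ht
    have hc : ((t * (r - 1) : ℕ) : ℚ) = ((r:ℚ)-1) * t := by
      rw [Nat.cast_mul, Nat.cast_sub hr]
      push_cast
      ring
    have hm0 : (m.factorial : ℚ) ≠ 0 := by positivity
    have hBm := hB t m
    rw [f_eq r, mul_pow, rescale_rescale_exp, mul_comm, map_smul, smul_eq_mul,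
      PowerSeries.coeff_mul, Finset.Nat.sum_antidiagonal_eq_sum_range_succ_mk,
      div_eq_iff hm0] at hBm
    rw [hBm]
    simp only [hc]
    have hsub : Finset.Icc t m ⊆ Finset.range (m+1) := fun x hx => by
      rw [Finset.mem_range]; rw [Finset.mem_Icc] at hx; omega
    rw [Finset.sum_subset hsub (by
      intro x hx hx'
      rw [Finset.mem_range] at hx
      rw [Finset.mem_Icc] at hx'
      rw [stirling2_eq_zero_of_lt x t (by omega)]
      simp)]
    rw [Finset.mul_sum, Finset.sum_mul]
    refine Finset.sum_congr rfl fun i hi => ?_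
    rw [Finset.mem_range] at hi
    have him : i ≤ m := by omega
    have hi0 : (i.factorial : ℚ) ≠ 0 := by positivity
    have hmi0 : ((m-i).factorial : ℚ) ≠ 0 := by positivity
    have ht0 : (t.factorial : ℚ) ≠ 0 := by positivity
    have hcoeff : coeff (R := ℚ) i ((exp ℚ - 1)^t) = (t.factorial : ℚ) * stirling2 i t / i.factorial := by
      rw [eq_div_iff hi0]
      exact coeff_exp_sub_one_pow i t
    rw [hcoeff, coeff_rescale, coeff_exp]
    simp only [Algebra.algebraMap_self, RingHom.id_apply]
    rw [Nat.cast_choose ℚ him]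
    field_simp
  rw [← Finset.sum_subset
      (show Finset.Icc lam m ⊆ Finset.range (m+1) from fun x hx => by
        rw [Finset.mem_range]; rw [Finset.mem_Icc] at hx; omega)
      (by
        intro x hx hx'
        rw [Finset.mem_range] at hx
        rw [Finset.mem_Icc] at hx'
        rw [Nat.choose_eq_zero_of_lt (by omega)]
        simp)]
  refine Finset.sum_congr rfl fun t ht => ?_
  rw [Finset.mem_Icc] at ht
  rw [hBeq t (Finset.mem_range.mpr (by omega))]
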